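/- Let P be a partial latin square of order n, and for each symbol σ let ν(σ) be the number of filled cells of P containing σ. Suppose that for every symbol σ, σ is missing from exactly n−ν(σ) rows and exactly n−ν(σ) columns, and suppose that for every empty cell b of P, Σ_{σ ∈ S(b)} 1/(n−ν(σ)) ≥ 1, where S(b) is the set of symbols supported by b. Then P satisfies Hall's Condition. -/

import Mathlib

open scoped Classical

section PLS

variable {n : ℕ}

/-- A partial latin square of order `n`: an `n × n` array of optional symbols,
no symbol occurring twice in any row or column. -/
def IsPLS (n : ℕ) (P : Fin n → Fin n → Option (Fin n)) : Prop :=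
  (∀ i j j' σ, P i j = some σ → P i j' = some σ → j = j') ∧
  (∀ i i' j σ, P i j = some σ → P i' j = some σ → i = i')

/-- `σ` is missing from row `i`. -/
def MissingRow (P : Fin n → Fin n → Option (Fin n)) (σ i : Fin n) : Prop :=
  ∀ j, P i j ≠ some σ

/-- `σ` is missing from column `j`. -/
def MissingCol (P : Fin n → Fin n → Option (Fin n)) (σ j : Fin n) : Prop :=
  ∀ i, P i j ≠ some σ

/-- A cell supports `σ` if it contains `σ`, or is empty and `σ` is missing from
its row and column. -/
def Supports (P : Fin n → Fin n → Option (Fin n)) (σ : Fin n) (c : Fin n × Fin n) : Prop :=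
  P c.1 c.2 = some σ ∨ (P c.1 c.2 = none ∧ MissingRow P σ c.1 ∧ MissingCol P σ c.2)

/-- A set of cells is independent if no two share a row or a column. -/
def IndepCells (S : Finset (Fin n × Fin n)) : Prop :=
  ∀ c ∈ S, ∀ c' ∈ S, c ≠ c' → c.1 ≠ c'.1 ∧ c.2 ≠ c'.2

/-- `alpha P σ T` : max size of an independent subset of `T` all of whose cells support `σ`. -/
noncomputable def alpha (P : Fin n → Fin n → Option (Fin n)) (σ : Fin n)
    (T : Finset (Fin n × Fin n)) : ℕ :=
  (T.powerset.filter (fun S => IndepCells S ∧ ∀ c ∈ S, Supports P σ c)).sup Finset.card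

/-- Hall's Condition: every set of cells satisfies the Hall Inequality. -/
def HallCond (n : ℕ) (P : Fin n → Fin n → Option (Fin n)) : Prop :=
  ∀ T : Finset (Fin n × Fin n), T.card ≤ ∑ σ : Fin n, alpha P σ T

/-- A latin square of order `n`. -/
def IsLatin (n : ℕ) (L : Fin n → Fin n → Fin n) : Prop :=
  (∀ i, Function.Injective (L i)) ∧ (∀ j, Function.Injective fun i => L i j)

/-- `L` is a completion of `P`. -/
def Completes (n : ℕ) (P : Fin n → Fin n → Option (Fin n)) (L : Fin n → Fin n → Fin n) : Prop :=
  IsLatin n L ∧ ∀ i j σ, P i j = some σ → L i j = σ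

/-- König-type bound via deficiency Hall. -/
lemma matching_lemma {n d : ℕ} (G : Finset (Fin n × Fin n))
    (hr : ∀ r, (G.filter (fun c => c.1 = r)).card ≤ d)
    (hc : ∀ j, (G.filter (fun c => c.2 = j)).card ≤ d) :
    ∃ M ⊆ G, IndepCells M ∧ G.card ≤ M.card * d := by
  classical
  rcases Nat.eq_zero_or_pos n with h0 | hn
  · subst h0
    have hG : G = ∅ := Finset.eq_empty_of_forall_notMem (fun p _ => p.1.elim0)
    exact ⟨∅, Finset.empty_subset _, fun c hc => by simp at hc, by simp [hG]⟩
  set R : Finset (Fin n) := G.image Prod.fst with hR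
  set t : Fin n → Finset (Fin n) :=
    fun r => (G.filter (fun c => c.1 = r)).image Prod.snd with ht
  have hmem : ∀ r c, (r, c) ∈ G ↔ c ∈ t r := by
    intro r c
    simp only [ht, Finset.mem_image, Finset.mem_filter]
    constructor
    · intro h; exact ⟨(r, c), ⟨h, rfl⟩, rfl⟩
    · rintro ⟨⟨r', c'⟩, ⟨hg, h1⟩, h2⟩
      simp only at h1 h2
      subst h1; subst h2; exact hg
  have htcard : ∀ r, (t r).card ≤ d := fun r =>
    le_trans Finset.card_image_le (hr r)
  set D : ℕ := R.powerset.sup (fun A => A.card - (A.biUnion t).card) with hD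
  have hDle : ∀ A ⊆ R, A.card ≤ (A.biUnion t).card + D := by
    intro A hA
    have : A.card - (A.biUnion t).card ≤ D :=
      Finset.le_sup (f := fun A => A.card - (A.biUnion t).card)
        (Finset.mem_powerset.mpr hA)
    omega
  set el : Fin n ↪ (Fin n ⊕ Fin D) := ⟨Sum.inl, Sum.inl_injective⟩ with hel
  set er : Fin D ↪ (Fin n ⊕ Fin D) := ⟨Sum.inr, Sum.inr_injective⟩ with her
  set t' : {x // x ∈ R} → Finset (Fin n ⊕ Fin D) :=
    fun r => (t r.1).map el ∪ Finset.univ.map er with ht'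
  have hall : ∀ s : Finset {x // x ∈ R}, s.card ≤ (s.biUnion t').card := by
    intro s
    rcases s.eq_empty_or_nonempty with rfl | hs
    · simp
    set A : Finset (Fin n) := s.image Subtype.val with hA
    have hAR : A ⊆ R := by
      intro x hx
      simp only [hA, Finset.mem_image] at hx
      obtain ⟨r, _, rfl⟩ := hx
      exact r.2
    have hsub : ((A.biUnion t).map el ∪ Finset.univ.map er) ⊆ s.biUnion t' := by
      intro x hx
      rcases Finset.mem_union.mp hx with hx | hx
      · obtain ⟨c, hcmem, rfl⟩ := Finset.mem_map.mp hx
        obtain ⟨r, hrA, hct⟩ := Finset.mem_biUnion.mp hcmem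
        obtain ⟨r', hr's, rfl⟩ := Finset.mem_image.mp hrA
        exact Finset.mem_biUnion.mpr ⟨r', hr's,
          Finset.mem_union.mpr (Or.inl (Finset.mem_map_of_mem el hct))⟩
      · obtain ⟨r', hr's⟩ := hs
        exact Finset.mem_biUnion.mpr ⟨r', hr's, Finset.mem_union.mpr (Or.inr hx)⟩
    have hdisj : Disjoint ((A.biUnion t).map el) ((Finset.univ : Finset (Fin D)).map er) := by
      simp only [Finset.disjoint_left, Finset.mem_map]
      rintro x ⟨a, _, rfl⟩ ⟨b, _, hb⟩
      simp [hel, her] at hb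
    have hcard2 : (((A.biUnion t)).map el ∪ Finset.univ.map er).card
        = (A.biUnion t).card + D := by
      rw [Finset.card_union_of_disjoint hdisj, Finset.card_map, Finset.card_map,
        Finset.card_univ, Fintype.card_fin]
    have hscard : s.card = A.card :=
      (Finset.card_image_of_injective s Subtype.val_injective).symm
    calc s.card = A.card := hscard
      _ ≤ (A.biUnion t).card + D := hDle A hAR
      _ = _ := hcard2.symm
      _ ≤ (s.biUnion t').card := Finset.card_le_card hsub
  obtain ⟨f, hfinj, hft⟩ := (Finset.all_card_le_biUnion_card_iff_exists_injective t').mp hall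
  set M : Finset (Fin n × Fin n) :=
    G.filter (fun p => ∃ h : p.1 ∈ R, f ⟨p.1, h⟩ = Sum.inl p.2) with hM
  have hMsub : M ⊆ G := Finset.filter_subset _ _
  have hMindep : IndepCells M := by
    intro p hp q hq hne
    obtain ⟨hpG, hpR, hpf⟩ := Finset.mem_filter.mp hp
    obtain ⟨hqG, hqR, hqf⟩ := Finset.mem_filter.mp hq
    constructor
    · intro h1
      have : (⟨p.1, hpR⟩ : {x // x ∈ R}) = ⟨q.1, hqR⟩ := Subtype.ext h1
      rw [this] at hpf
      rw [hqf] at hpf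
      exact hne (Prod.ext h1 (Sum.inl_injective hpf.symm))
    · intro h2
      have : f ⟨p.1, hpR⟩ = f ⟨q.1, hqR⟩ := by rw [hpf, hqf, h2]
      have := hfinj this
      exact hne (Prod.ext (congrArg Subtype.val this) h2)
  -- cardinality of M
  set S : Finset {x // x ∈ R} := Finset.univ.filter (fun r => (f r).isLeft = true) with hS
  have hSM : S.card ≤ M.card := by
    apply Finset.card_le_card_of_injOn
      (fun r => (r.1, ((f r).getLeft?).getD ⟨0, hn⟩))
    · intro r hrS
      have hleft : (f r).isLeft := (Finset.mem_filter.mp hrS).2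
      obtain ⟨c, hc'⟩ : ∃ c, f r = Sum.inl c := by
        cases hfr : f r with
        | inl c => exact ⟨c, rfl⟩
        | inr x => rw [hfr] at hleft; simp at hleft
      have hct : c ∈ t r.1 := by
        have := hft r
        rw [hc'] at this
        rcases Finset.mem_union.mp this with h | h
        · obtain ⟨c', hc't, hcc⟩ := Finset.mem_map.mp h
          have : c' = c := Sum.inl_injective hcc
          rwa [this] at hc't
        · obtain ⟨x, _, hx⟩ := Finset.mem_map.mp h
          simp [her] at hx
      have hG : (r.1, c) ∈ G := (hmem r.1 c).mpr hct
      simp only [hc', Sum.getLeft?, Option.getD_some]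
      refine Finset.mem_filter.mpr ⟨hG, r.2, ?_⟩
      simpa using hc'
    · intro r hrS r' hr'S hxy
      have h1 : r.1 = r'.1 := congrArg Prod.fst hxy
      exact Subtype.ext h1
  have hRS : R.card ≤ S.card + D := by
    have hcompl : (Finset.univ.filter (fun r : {x // x ∈ R} => ¬ ((f r).isLeft = true))).card ≤ D := by
      have : (Finset.univ.filter (fun r : {x // x ∈ R} => ¬ ((f r).isLeft = true))).card
          ≤ ((Finset.univ : Finset (Fin D)).map er).card := by
        apply Finset.card_le_card_of_injOn f
        · intro r hrS
          have := (Finset.mem_filter.mp hrS).2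
          cases hfr : f r with
          | inl c => rw [hfr] at this; simp at this
          | inr x => exact Finset.mem_map.mpr ⟨x, Finset.mem_univ x, rfl⟩
        · intro a _ b _ hab; exact hfinj hab
      simpa using this
    have hsum := Finset.card_filter_add_card_filter_not
      (s := (Finset.univ : Finset {x // x ∈ R})) (p := fun r => (f r).isLeft = true)
    have hcardR : (Finset.univ : Finset {x // x ∈ R}).card = R.card := by
      simp [Fintype.card_coe]
    rw [← hS] at hsum
    omega
  have hMR : R.card ≤ M.card + D := le_trans hRS (by omega)
  -- now the counting
  have hGsum : G.card = ∑ r ∈ R, (G.filter (fun p => p.1 = r)).card :=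
    Finset.card_eq_sum_card_fiberwise (fun p hp =>
      Finset.mem_image.mpr ⟨p, hp, rfl⟩)
  refine ⟨M, hMsub, hMindep, ?_⟩
  rcases Nat.eq_zero_or_pos D with hD0 | hDpos
  · have : G.card ≤ R.card * d := by
      rw [hGsum]
      calc ∑ r ∈ R, (G.filter (fun p => p.1 = r)).card ≤ ∑ _r ∈ R, d :=
            Finset.sum_le_sum (fun r _ => hr r)
        _ = R.card * d := by rw [Finset.sum_const, smul_eq_mul]
    have hRM : R.card ≤ M.card := by omega
    exact le_trans this (Nat.mul_le_mul_right d hRM)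
  · obtain ⟨A, hAmem, hAeq⟩ := Finset.exists_mem_eq_sup R.powerset
      ⟨∅, Finset.mem_powerset.mpr (Finset.empty_subset R)⟩
      (fun A => A.card - (A.biUnion t).card)
    have hAR : A ⊆ R := Finset.mem_powerset.mp hAmem
    set N : Finset (Fin n) := A.biUnion t with hN
    have hAeq' : A.card = N.card + D := by
      have h : D = A.card - N.card := hAeq
      omega
    have hsplit : ∑ r ∈ R, (G.filter (fun p => p.1 = r)).card
        = ∑ r ∈ (R \ A), (G.filter (fun p => p.1 = r)).card
          + ∑ r ∈ A, (G.filter (fun p => p.1 = r)).card :=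
      (Finset.sum_sdiff hAR).symm
    have hbound2 : ∑ r ∈ (R \ A), (G.filter (fun p => p.1 = r)).card
        ≤ (R.card - A.card) * d := by
      calc ∑ r ∈ (R \ A), (G.filter (fun p => p.1 = r)).card
          ≤ ∑ _r ∈ (R \ A), d := Finset.sum_le_sum (fun r _ => hr r)
        _ = (R \ A).card * d := by rw [Finset.sum_const, smul_eq_mul]
        _ = (R.card - A.card) * d := by rw [Finset.card_sdiff_of_subset hAR]
    have hbound1 : ∑ r ∈ A, (G.filter (fun p => p.1 = r)).card ≤ N.card * d := by
      have h1 : (G.filter (fun p => p.1 ∈ A)).card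
          = ∑ r ∈ A, (G.filter (fun p => p.1 = r)).card := by
        rw [Finset.card_eq_sum_card_fiberwise
          (f := Prod.fst) (s := G.filter (fun p => p.1 ∈ A)) (t := A) (fun p hp => (Finset.mem_filter.mp hp).2)]
        apply Finset.sum_congr rfl
        intro r hrA
        congr 1
        ext p
        simp only [Finset.filter_filter, Finset.mem_filter]
        constructor
        · rintro ⟨hg, _, h2⟩; exact ⟨hg, h2⟩
        · rintro ⟨hg, h2⟩; exact ⟨hg, h2 ▸ hrA, h2⟩
      have h2 : (G.filter (fun p => p.1 ∈ A)).card ≤ N.card * d := by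
        rw [Finset.card_eq_sum_card_fiberwise (f := Prod.snd) (t := N)
          (fun p hp => by
            obtain ⟨hg, hA'⟩ := Finset.mem_filter.mp hp
            exact Finset.mem_biUnion.mpr ⟨p.1, hA', (hmem p.1 p.2).mp (by simpa using hg)⟩)]
        calc ∑ c ∈ N, ((G.filter (fun p => p.1 ∈ A)).filter (fun p => p.2 = c)).card
            ≤ ∑ c ∈ N, d := Finset.sum_le_sum (fun c _ => le_trans
              (Finset.card_le_card (fun p hp => by
                obtain ⟨hp1, hp2⟩ := Finset.mem_filter.mp hp
                exact Finset.mem_filter.mpr ⟨(Finset.mem_filter.mp hp1).1, hp2⟩))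
              (hc c))
          _ = N.card * d := by rw [Finset.sum_const, smul_eq_mul]
      omega
    have htotal : G.card ≤ (N.card + (R.card - A.card)) * d := by
      rw [hGsum, hsplit, add_mul]
      omega
    have hfin : N.card + (R.card - A.card) ≤ M.card := by
      have hAcard : A.card ≤ R.card := Finset.card_le_card hAR
      omega
    exact le_trans htotal (Nat.mul_le_mul_right d hfin)


/-- Helper: a filled cell and another supporting cell lie in different row and column. -/
lemma filled_indep {n : ℕ} {P : Fin n → Fin n → Option (Fin n)} (hP : IsPLS n P)
    {σ : Fin n} {c c' : Fin n × Fin n} (hcf : P c.1 c.2 = some σ)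
    (hc' : Supports P σ c') (hne : c ≠ c') : c.1 ≠ c'.1 ∧ c.2 ≠ c'.2 := by
  rcases hc' with hf | ⟨hempty, hmr, hmc⟩
  · constructor
    · intro h1
      apply hne
      have h2 : c.2 = c'.2 := hP.1 c.1 c.2 c'.2 σ hcf (h1 ▸ hf)
      exact Prod.ext h1 h2
    · intro h2
      apply hne
      have h1 : c.1 = c'.1 := hP.2 c.1 c'.1 c.2 σ hcf (h2 ▸ hf)
      exact Prod.ext h1 h2
  · constructor
    · intro h1
      exact hmr c.2 (h1 ▸ hcf)
    · intro h2
      exact hmc c.1 (h2 ▸ hcf)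


end PLS

theorem stmt5 (n : ℕ) (P : Fin n → Fin n → Option (Fin n)) (hP : IsPLS n P)
    (ν : Fin n → ℕ)
    (hν : ∀ σ, ν σ = (Finset.univ.filter
      (fun c : Fin n × Fin n => P c.1 c.2 = some σ)).card)
    (hrow : ∀ σ, (Finset.univ.filter (fun i => MissingRow P σ i)).card = n - ν σ)
    (hcol : ∀ σ, (Finset.univ.filter (fun j => MissingCol P σ j)).card = n - ν σ)
    (hb : ∀ b : Fin n × Fin n, P b.1 b.2 = none →
      1 ≤ ∑ σ ∈ Finset.univ.filter (fun σ => Supports P σ b),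
            (1 : ℚ) / ((n : ℚ) - (ν σ : ℚ))) :
    HallCond n P := by
  intro T
  classical
  rcases Nat.eq_zero_or_pos n with h0 | hn
  · subst h0
    have hT : T = ∅ := Finset.eq_empty_of_forall_notMem (fun p _ => p.1.elim0)
    simp [hT]
  set E : Finset (Fin n × Fin n) := T.filter (fun c => P c.1 c.2 = none) with hE
  set F : Fin n → Finset (Fin n × Fin n) :=
    fun σ => T.filter (fun c => P c.1 c.2 = some σ) with hF
  set Eσ : Fin n → Finset (Fin n × Fin n) :=
    fun σ => E.filter (fun c => Supports P σ c) with hEσ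
  have hEσ_empty : ∀ σ, ∀ c ∈ Eσ σ, P c.1 c.2 = none ∧ Supports P σ c := by
    intro σ c hc
    obtain ⟨hcE, hsup⟩ := Finset.mem_filter.mp hc
    exact ⟨(Finset.mem_filter.mp hcE).2, hsup⟩
  have hEσ_miss : ∀ σ, ∀ c ∈ Eσ σ, MissingRow P σ c.1 ∧ MissingCol P σ c.2 := by
    intro σ c hc
    obtain ⟨hnone, hsup⟩ := hEσ_empty σ c hc
    rcases hsup with hf | ⟨_, hmr, hmc⟩
    · rw [hnone] at hf; exact absurd hf (by simp)
    · exact ⟨hmr, hmc⟩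
  -- degree bounds for Eσ
  have hdegrow : ∀ σ r, ((Eσ σ).filter (fun c => c.1 = r)).card ≤ n - ν σ := by
    intro σ r
    rw [← hcol σ]
    apply Finset.card_le_card_of_injOn Prod.snd
    · intro c hc
      obtain ⟨hcE, _⟩ := Finset.mem_filter.mp hc
      exact Finset.mem_filter.mpr ⟨Finset.mem_univ _, (hEσ_miss σ c hcE).2⟩
    · intro c hc c' hc' hcc
      have h1 : c.1 = r := (Finset.mem_filter.mp hc).2
      have h1' : c'.1 = r := (Finset.mem_filter.mp hc').2
      exact Prod.ext (h1.trans h1'.symm) hcc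
  have hdegcol : ∀ σ j, ((Eσ σ).filter (fun c => c.2 = j)).card ≤ n - ν σ := by
    intro σ j
    rw [← hrow σ]
    apply Finset.card_le_card_of_injOn Prod.fst
    · intro c hc
      obtain ⟨hcE, _⟩ := Finset.mem_filter.mp hc
      exact Finset.mem_filter.mpr ⟨Finset.mem_univ _, (hEσ_miss σ c hcE).1⟩
    · intro c hc c' hc' hcc
      have h2 : c.2 = j := (Finset.mem_filter.mp hc).2
      have h2' : c'.2 = j := (Finset.mem_filter.mp hc').2
      exact Prod.ext hcc (h2.trans h2'.symm)
  choose M hMsub hMindep hMcard using fun σ =>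
    matching_lemma (Eσ σ) (hdegrow σ) (hdegcol σ)
  -- alpha lower bound
  have halpha : ∀ σ, (F σ).card + (M σ).card ≤ alpha P σ T := by
    intro σ
    have hFT : F σ ⊆ T := Finset.filter_subset _ _
    have hMT : M σ ⊆ T := fun c hc => by
      have := hMsub σ hc
      exact (Finset.mem_filter.mp (Finset.mem_filter.mp this).1).1
    have hdisj : Disjoint (F σ) (M σ) := by
      rw [Finset.disjoint_left]
      intro c hcF hcM
      have h1 : P c.1 c.2 = some σ := (Finset.mem_filter.mp hcF).2
      have h2 : P c.1 c.2 = none := (hEσ_empty σ c (hMsub σ hcM)).1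
      rw [h1] at h2; exact absurd h2 (by simp)
    have hmemfilter : F σ ∪ M σ ∈
        (T.powerset.filter (fun S => IndepCells S ∧ ∀ c ∈ S, Supports P σ c)) := by
      refine Finset.mem_filter.mpr ⟨Finset.mem_powerset.mpr
        (Finset.union_subset hFT hMT), ?_, ?_⟩
      · intro c hc c' hc' hne
        rcases Finset.mem_union.mp hc with hcF | hcM <;>
          rcases Finset.mem_union.mp hc' with hc'F | hc'M
        · exact filled_indep hP (Finset.mem_filter.mp hcF).2
            (Or.inl (Finset.mem_filter.mp hc'F).2) hne
        · exact filled_indep hP (Finset.mem_filter.mp hcF).2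
            (hEσ_empty σ c' (hMsub σ hc'M)).2 hne
        · have := filled_indep hP (Finset.mem_filter.mp hc'F).2
            (hEσ_empty σ c (hMsub σ hcM)).2 (Ne.symm hne)
          exact ⟨this.1.symm, this.2.symm⟩
        · exact hMindep σ c hcM c' hc'M hne
      · intro c hc
        rcases Finset.mem_union.mp hc with hcF | hcM
        · exact Or.inl (Finset.mem_filter.mp hcF).2
        · exact (hEσ_empty σ c (hMsub σ hcM)).2
    have := Finset.le_sup (f := Finset.card) hmemfilter
    rwa [Finset.card_union_of_disjoint hdisj] at this
  -- |T| = Σ |F σ| + |E|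
  have hTcard : T.card = (∑ σ : Fin n, (F σ).card) + E.card := by
    have hsplit := Finset.card_filter_add_card_filter_not
      (s := T) (p := fun c => P c.1 c.2 = none)
    rw [← hE] at hsplit
    have hfull : (T.filter (fun c => ¬ P c.1 c.2 = none)).card
        = ∑ σ : Fin n, (F σ).card := by
      rw [Finset.card_eq_sum_card_fiberwise
        (f := fun c => (P c.1 c.2).getD ⟨0, hn⟩) (t := Finset.univ)
        (fun c _ => Finset.mem_univ _)]
      apply Finset.sum_congr rfl
      intro σ _
      congr 1
      ext c
      simp only [Finset.filter_filter, Finset.mem_filter, hF]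
      constructor
      · rintro ⟨hcT, hne, hget⟩
        obtain ⟨τ, hτ⟩ := Option.ne_none_iff_exists'.mp hne
        rw [hτ] at hget
        simp only [Option.getD_some] at hget
        exact ⟨hcT, hget ▸ hτ⟩
      · rintro ⟨hcT, hsome⟩
        refine ⟨hcT, by simp [hsome], by simp [hsome]⟩
    omega
  -- |E| ≤ Σ |M σ| via rationals
  have hEle : E.card ≤ ∑ σ : Fin n, (M σ).card := by
    have hQ : (E.card : ℚ) ≤ ∑ σ : Fin n, ((M σ).card : ℚ) := by
      have step1 : (E.card : ℚ) ≤ ∑ b ∈ E,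
          ∑ σ ∈ Finset.univ.filter (fun σ => Supports P σ b),
            (1 : ℚ) / ((n : ℚ) - (ν σ : ℚ)) := by
        calc (E.card : ℚ) = ∑ _b ∈ E, (1 : ℚ) := by
              rw [Finset.sum_const, nsmul_eq_mul, mul_one]
          _ ≤ _ := Finset.sum_le_sum (fun b hbE =>
              hb b (Finset.mem_filter.mp hbE).2)
      have step2 : ∑ b ∈ E,
          ∑ σ ∈ Finset.univ.filter (fun σ => Supports P σ b),
            (1 : ℚ) / ((n : ℚ) - (ν σ : ℚ))
          = ∑ σ : Fin n, ((Eσ σ).card : ℚ) * ((1 : ℚ) / ((n : ℚ) - (ν σ : ℚ))) := by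
        have : ∀ b ∈ E, ∑ σ ∈ Finset.univ.filter (fun σ => Supports P σ b),
            (1 : ℚ) / ((n : ℚ) - (ν σ : ℚ))
            = ∑ σ : Fin n, if Supports P σ b then (1 : ℚ) / ((n : ℚ) - (ν σ : ℚ)) else 0 :=
          fun b _ => Finset.sum_filter _ _
        rw [Finset.sum_congr rfl this, Finset.sum_comm]
        apply Finset.sum_congr rfl
        intro σ _
        rw [← Finset.sum_filter]
        have hEσeq : E.filter (fun b => Supports P σ b) = Eσ σ := rfl
        rw [hEσeq, Finset.sum_const, nsmul_eq_mul]
      have step3 : ∀ σ : Fin n,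
          ((Eσ σ).card : ℚ) * ((1 : ℚ) / ((n : ℚ) - (ν σ : ℚ))) ≤ ((M σ).card : ℚ) := by
        intro σ
        rcases (Eσ σ).eq_empty_or_nonempty with hemp | ⟨b, hbE⟩
        · rw [hemp]; simp
        · have hmr : MissingRow P σ b.1 := (hEσ_miss σ b hbE).1
          have hpos : 0 < n - ν σ := by
            rw [← hrow σ]
            exact Finset.card_pos.mpr ⟨b.1, Finset.mem_filter.mpr ⟨Finset.mem_univ _, hmr⟩⟩
          have hν_lt : ν σ < n := by omega
          have hcast : ((n - ν σ : ℕ) : ℚ) = (n : ℚ) - (ν σ : ℚ) := by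
            rw [Nat.cast_sub (le_of_lt hν_lt)]
          have hdpos : (0 : ℚ) < (n : ℚ) - (ν σ : ℚ) := by
            rw [← hcast]
            exact_mod_cast hpos
          rw [mul_one_div, div_le_iff₀ hdpos, ← hcast]
          exact_mod_cast hMcard σ
      calc (E.card : ℚ) ≤ _ := step1
        _ = _ := step2
        _ ≤ ∑ σ : Fin n, ((M σ).card : ℚ) := Finset.sum_le_sum (fun σ _ => step3 σ)
    have h2 : ((∑ σ : Fin n, (M σ).card : ℕ) : ℚ) = ∑ σ : Fin n, ((M σ).card : ℚ) := by
      push_cast; rfl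
    rw [← h2] at hQ
    exact_mod_cast hQ
  calc T.card = (∑ σ : Fin n, (F σ).card) + E.card := hTcard
    _ ≤ (∑ σ : Fin n, (F σ).card) + ∑ σ : Fin n, (M σ).card := by omega
    _ = ∑ σ : Fin n, ((F σ).card + (M σ).card) := (Finset.sum_add_distrib).symm
    _ ≤ ∑ σ : Fin n, alpha P σ T := Finset.sum_le_sum (fun σ _ => halpha σ)
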